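/- For the complete bipartite graph K_{2,2ℓ} with strict majority thresholds, the sequence S_0=S_1={v_1,v_2}, S_2=∅ (where v_1,v_2 are the two nodes on the small side) is a timed target set of size 4, and hence the minimum timed target set size equals 4=4n/(Δ+2). -/
import Mathlib


open Finset
open scoped Classical

variable {V : Type*}

noncomputable def Qseq (G : SimpleGraph V) [Fintype V] (τ : V → ℕ) (S : ℕ → Finset V) :
    ℕ → Finset V
  | 0 => ∅
  | i + 1 => Finset.univ.filter fun v =>
      τ v ≤ (G.neighborFinset v ∩ (S i ∪ Qseq G τ S i)).card

def IsTTS (G : SimpleGraph V) [Fintype V] (τ : V → ℕ) (S : ℕ → Finset V) (k : ℕ) : Prop :=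
  S k = ∅ ∧ Qseq G τ S k = Finset.univ

def ttsSize (S : ℕ → Finset V) (k : ℕ) : ℕ := ∑ i ∈ Finset.range (k + 1), (S i).card

noncomputable def strictMaj (G : SimpleGraph V) [Fintype V] (v : V) : ℕ := (G.degree v + 2) / 2

noncomputable def npStep (G : SimpleGraph V) [Fintype V] (τ : V → ℕ) (A : Finset V) : Finset V :=
  Finset.univ.filter fun v => τ v ≤ (G.neighborFinset v ∩ A).card

def IsTS (G : SimpleGraph V) [Fintype V] (τ : V → ℕ) (S : Finset V) : Prop :=
  ∃ i : ℕ, (npStep G τ)^[i] S = Finset.univ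

noncomputable def MTT (G : SimpleGraph V) [Fintype V] (τ : V → ℕ) : ℕ :=
  sInf {m | ∃ (S : ℕ → Finset V) (k : ℕ), IsTTS G τ S k ∧ ttsSize S k = m}

/-! ### Auxiliary lemmas -/

lemma pair_inter_card {α : Type*} [DecidableEq α] {x y : α} (hxy : x ≠ y) (A : Finset α) :
    2 ≤ ({x, y} ∩ A).card ↔ x ∈ A ∧ y ∈ A := by
  constructor
  · intro h
    have h1 : ({x, y} ∩ A : Finset α) ⊆ {x, y} := Finset.inter_subset_left
    have h2 := Finset.eq_of_subset_of_card_le h1 (by rw [Finset.card_pair hxy]; exact h)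
    constructor
    · exact Finset.mem_of_mem_inter_right (h2 ▸ Finset.mem_insert_self x {y})
    · exact Finset.mem_of_mem_inter_right
        (h2 ▸ Finset.mem_insert_of_mem (Finset.mem_singleton_self y))
  · rintro ⟨hx, hy⟩
    have h1 : ({x, y} : Finset α) ⊆ {x, y} ∩ A := by
      apply Finset.subset_inter (Finset.Subset.refl _)
      intro z hz
      rcases Finset.mem_insert.1 hz with rfl | hz
      · exact hx
      · rw [Finset.mem_singleton] at hz; subst hz; exact hy
    calc 2 = ({x, y} : Finset α).card := (Finset.card_pair hxy).symm
    _ ≤ _ := Finset.card_le_card h1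

section K22l

variable (l : ℕ)


lemma nb_inl (a : Fin 2) :
    (completeBipartiteGraph (Fin 2) (Fin (2 * l))).neighborFinset (Sum.inl a) = ((Finset.univ : Finset (Fin (2 * l))).image Sum.inr) := by
  ext x
  cases x <;> simp [SimpleGraph.mem_neighborFinset]

lemma nb_inr (b : Fin (2 * l)) :
    (completeBipartiteGraph (Fin 2) (Fin (2 * l))).neighborFinset (Sum.inr b) =
      ({Sum.inl 0, Sum.inl 1} : Finset (Fin 2 ⊕ Fin (2 * l))) := by
  ext x
  cases x with
  | inl a =>
    simp only [SimpleGraph.mem_neighborFinset, completeBipartiteGraph_adj,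
      Sum.isRight_inr, Sum.isLeft_inl, Sum.isLeft_inr, Sum.isRight_inl,
      Finset.mem_insert, Finset.mem_singleton, Sum.inl.injEq]
    revert a; decide
  | inr c => simp [SimpleGraph.mem_neighborFinset]

lemma Rset_card : (((Finset.univ : Finset (Fin (2 * l))).image Sum.inr) : Finset (Fin 2 ⊕ Fin (2 * l))).card = 2 * l := by
  rw [Finset.card_image_of_injective _ Sum.inr_injective, Finset.card_univ, Fintype.card_fin]

lemma deg_inl (a : Fin 2) : (completeBipartiteGraph (Fin 2) (Fin (2 * l))).degree (Sum.inl a) = 2 * l := by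
  rw [← SimpleGraph.card_neighborFinset_eq_degree, nb_inl, Rset_card]

lemma deg_inr (b : Fin (2 * l)) : (completeBipartiteGraph (Fin 2) (Fin (2 * l))).degree (Sum.inr b) = 2 := by
  rw [← SimpleGraph.card_neighborFinset_eq_degree, nb_inr]
  exact Finset.card_pair (by simp [Fin.ext_iff])

lemma tau_inl (a : Fin 2) : (strictMaj (completeBipartiteGraph (Fin 2) (Fin (2 * l)))) (Sum.inl a) = l + 1 := by
  rw [strictMaj, deg_inl]; omega

lemma tau_inr (b : Fin (2 * l)) : (strictMaj (completeBipartiteGraph (Fin 2) (Fin (2 * l)))) (Sum.inr b) = 2 := by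
  rw [strictMaj, deg_inr]

lemma inl_ne : (Sum.inl 0 : Fin 2 ⊕ Fin (2 * l)) ≠ Sum.inl 1 := by
  simp [Fin.ext_iff]

variable (S : ℕ → Finset (Fin 2 ⊕ Fin (2 * l)))

lemma mem_Q_inl (i : ℕ) (a : Fin 2) :
    Sum.inl a ∈ Qseq (completeBipartiteGraph (Fin 2) (Fin (2 * l))) (strictMaj (completeBipartiteGraph (Fin 2) (Fin (2 * l)))) S (i + 1) ↔
      l + 1 ≤ (((Finset.univ : Finset (Fin (2 * l))).image Sum.inr) ∩ (S i ∪ Qseq (completeBipartiteGraph (Fin 2) (Fin (2 * l))) (strictMaj (completeBipartiteGraph (Fin 2) (Fin (2 * l)))) S i)).card := by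
  rw [Qseq]
  simp only [Finset.mem_filter, Finset.mem_univ, true_and, tau_inl, nb_inl]
  congr!

lemma mem_Q_inr (i : ℕ) (b : Fin (2 * l)) :
    Sum.inr b ∈ Qseq (completeBipartiteGraph (Fin 2) (Fin (2 * l))) (strictMaj (completeBipartiteGraph (Fin 2) (Fin (2 * l)))) S (i + 1) ↔
      (Sum.inl 0 ∈ S i ∪ Qseq (completeBipartiteGraph (Fin 2) (Fin (2 * l))) (strictMaj (completeBipartiteGraph (Fin 2) (Fin (2 * l)))) S i ∧ Sum.inl 1 ∈ S i ∪ Qseq (completeBipartiteGraph (Fin 2) (Fin (2 * l))) (strictMaj (completeBipartiteGraph (Fin 2) (Fin (2 * l)))) S i) := by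
  rw [Qseq]
  simp only [Finset.mem_filter, Finset.mem_univ, true_and, tau_inr, nb_inr]
  convert pair_inter_card (inl_ne l)
    (S i ∪ Qseq (completeBipartiteGraph (Fin 2) (Fin (2 * l)))
      (strictMaj (completeBipartiteGraph (Fin 2) (Fin (2 * l)))) S i) using 2
  congr!

/-- If no element of the right side is in `Q_{i+1}`, then `((Finset.univ : Finset (Fin (2 * l))).image Sum.inr) ∩ (S(i+1) ∪ Q(i+1)) ⊆ S(i+1)`. -/
lemma Rset_inter_subset (i : ℕ)
    (hP : ¬(Sum.inl 0 ∈ S i ∪ Qseq (completeBipartiteGraph (Fin 2) (Fin (2 * l))) (strictMaj (completeBipartiteGraph (Fin 2) (Fin (2 * l)))) S i ∧ Sum.inl 1 ∈ S i ∪ Qseq (completeBipartiteGraph (Fin 2) (Fin (2 * l))) (strictMaj (completeBipartiteGraph (Fin 2) (Fin (2 * l)))) S i)) :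
    ((Finset.univ : Finset (Fin (2 * l))).image Sum.inr) ∩ (S (i + 1) ∪ Qseq (completeBipartiteGraph (Fin 2) (Fin (2 * l))) (strictMaj (completeBipartiteGraph (Fin 2) (Fin (2 * l)))) S (i + 1)) ⊆ S (i + 1) := by
  intro x hx
  rw [Finset.mem_inter] at hx
  obtain ⟨hx1, hx2⟩ := hx
  obtain ⟨b, _, rfl⟩ := Finset.mem_image.1 hx1
  rcases Finset.mem_union.1 hx2 with h | h
  · exact h
  · exact absurd ((mem_Q_inr l S i b).1 h) hP

lemma pair_sub_card {T : Finset (Fin 2 ⊕ Fin (2 * l))}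
    (h0 : Sum.inl 0 ∈ T) (h1 : Sum.inl 1 ∈ T) : 2 ≤ T.card := by
  calc 2 = ({Sum.inl 0, Sum.inl 1} : Finset (Fin 2 ⊕ Fin (2 * l))).card :=
        (Finset.card_pair (inl_ne l)).symm
  _ ≤ T.card := Finset.card_le_card (Finset.insert_subset h0 (by simpa using h1))

lemma four_le_card {T : Finset (Fin 2 ⊕ Fin (2 * l))} (hl : 1 ≤ l)
    (h0 : Sum.inl 0 ∈ T) (h1 : Sum.inl 1 ∈ T)
    (hR : l + 1 ≤ (((Finset.univ : Finset (Fin (2 * l))).image Sum.inr) ∩ T).card) : 4 ≤ T.card := by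
  have hdisj : Disjoint ({Sum.inl 0, Sum.inl 1} : Finset (Fin 2 ⊕ Fin (2 * l))) (((Finset.univ : Finset (Fin (2 * l))).image Sum.inr) ∩ T) := by
    rw [Finset.disjoint_left]
    intro x hx hx'
    obtain ⟨b, _, rfl⟩ := Finset.mem_image.1 (Finset.mem_of_mem_inter_left hx')
    simp at hx
  have hsub : ({Sum.inl 0, Sum.inl 1} : Finset (Fin 2 ⊕ Fin (2 * l))) ∪ (((Finset.univ : Finset (Fin (2 * l))).image Sum.inr) ∩ T) ⊆ T := by
    apply Finset.union_subset
    · exact Finset.insert_subset h0 (by simpa using h1)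
    · exact Finset.inter_subset_right
  have := Finset.card_le_card hsub
  rw [Finset.card_union_of_disjoint hdisj, Finset.card_pair (inl_ne l)] at this
  omega

/-- Lemma A: if either both left vertices are active or at least `l+1` right vertices are
active at time `i`, then at least 2 seeds have been used up to time `i`. -/
lemma lemA (hl : 1 ≤ l) : ∀ i : ℕ,
    ((Sum.inl 0 ∈ S i ∪ Qseq (completeBipartiteGraph (Fin 2) (Fin (2 * l))) (strictMaj (completeBipartiteGraph (Fin 2) (Fin (2 * l)))) S i ∧ Sum.inl 1 ∈ S i ∪ Qseq (completeBipartiteGraph (Fin 2) (Fin (2 * l))) (strictMaj (completeBipartiteGraph (Fin 2) (Fin (2 * l)))) S i) ∨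
      l + 1 ≤ (((Finset.univ : Finset (Fin (2 * l))).image Sum.inr) ∩ (S i ∪ Qseq (completeBipartiteGraph (Fin 2) (Fin (2 * l))) (strictMaj (completeBipartiteGraph (Fin 2) (Fin (2 * l)))) S i)).card) →
    2 ≤ ∑ j ∈ Finset.range (i + 1), (S j).card := by
  intro i
  induction i with
  | zero =>
    rintro (⟨h0, h1⟩ | hR)
    · rw [Qseq, Finset.union_empty] at h0 h1
      rw [Finset.sum_range_one]
      exact pair_sub_card l h0 h1
    · rw [Qseq, Finset.union_empty] at hR
      rw [Finset.sum_range_one]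
      have := Finset.card_le_card (Finset.inter_subset_right
        (s₁ := (((Finset.univ : Finset (Fin (2 * l))).image Sum.inr) : Finset (Fin 2 ⊕ Fin (2 * l)))) (s₂ := S 0))
      omega
  | succ i ih =>
    intro h
    rw [Finset.sum_range_succ]
    by_cases hR : l + 1 ≤ (((Finset.univ : Finset (Fin (2 * l))).image Sum.inr) ∩ (S i ∪ Qseq (completeBipartiteGraph (Fin 2) (Fin (2 * l))) (strictMaj (completeBipartiteGraph (Fin 2) (Fin (2 * l)))) S i)).card
    · have := ih (Or.inr hR); omega
    · by_cases hP : Sum.inl 0 ∈ S i ∪ Qseq (completeBipartiteGraph (Fin 2) (Fin (2 * l))) (strictMaj (completeBipartiteGraph (Fin 2) (Fin (2 * l)))) S i ∧ Sum.inl 1 ∈ S i ∪ Qseq (completeBipartiteGraph (Fin 2) (Fin (2 * l))) (strictMaj (completeBipartiteGraph (Fin 2) (Fin (2 * l)))) S i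
      · have := ih (Or.inl hP); omega
      · rcases h with ⟨h0, h1⟩ | hRR
        · -- both inl in S (i+1) since not in Q (i+1)
          have h0' : Sum.inl 0 ∈ S (i + 1) := by
            rcases Finset.mem_union.1 h0 with h | h
            · exact h
            · exact absurd ((mem_Q_inl l S i 0).1 h) hR
          have h1' : Sum.inl 1 ∈ S (i + 1) := by
            rcases Finset.mem_union.1 h1 with h | h
            · exact h
            · exact absurd ((mem_Q_inl l S i 1).1 h) hR
          have := pair_sub_card l h0' h1'
          omega
        · have hsub := Rset_inter_subset l S i hP
          have := Finset.card_le_card hsub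
          omega

/-- Lemma B: if both left vertices and at least `l+1` right vertices are active at time `i`,
then at least 4 seeds have been used up to time `i`. -/
lemma lemB (hl : 1 ≤ l) : ∀ i : ℕ,
    (Sum.inl 0 ∈ S i ∪ Qseq (completeBipartiteGraph (Fin 2) (Fin (2 * l))) (strictMaj (completeBipartiteGraph (Fin 2) (Fin (2 * l)))) S i ∧ Sum.inl 1 ∈ S i ∪ Qseq (completeBipartiteGraph (Fin 2) (Fin (2 * l))) (strictMaj (completeBipartiteGraph (Fin 2) (Fin (2 * l)))) S i) →
    l + 1 ≤ (((Finset.univ : Finset (Fin (2 * l))).image Sum.inr) ∩ (S i ∪ Qseq (completeBipartiteGraph (Fin 2) (Fin (2 * l))) (strictMaj (completeBipartiteGraph (Fin 2) (Fin (2 * l)))) S i)).card →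
    4 ≤ ∑ j ∈ Finset.range (i + 1), (S j).card := by
  intro i
  induction i with
  | zero =>
    intro ⟨h0, h1⟩ hR
    rw [Qseq, Finset.union_empty] at h0 h1 hR
    rw [Finset.sum_range_one]
    exact four_le_card l hl h0 h1 hR
  | succ i ih =>
    intro ⟨h0, h1⟩ hR1
    rw [Finset.sum_range_succ]
    by_cases hR : l + 1 ≤ (((Finset.univ : Finset (Fin (2 * l))).image Sum.inr) ∩ (S i ∪ Qseq (completeBipartiteGraph (Fin 2) (Fin (2 * l))) (strictMaj (completeBipartiteGraph (Fin 2) (Fin (2 * l)))) S i)).card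
    · by_cases hP : Sum.inl 0 ∈ S i ∪ Qseq (completeBipartiteGraph (Fin 2) (Fin (2 * l))) (strictMaj (completeBipartiteGraph (Fin 2) (Fin (2 * l)))) S i ∧ Sum.inl 1 ∈ S i ∪ Qseq (completeBipartiteGraph (Fin 2) (Fin (2 * l))) (strictMaj (completeBipartiteGraph (Fin 2) (Fin (2 * l)))) S i
      · have := ih hP hR; omega
      · have hsub := Rset_inter_subset l S i hP
        have h2 : l + 1 ≤ (S (i + 1)).card :=
          le_trans hR1 (Finset.card_le_card hsub)
        have h3 := lemA l S hl i (Or.inr hR)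
        omega
    · have h0' : Sum.inl 0 ∈ S (i + 1) := by
        rcases Finset.mem_union.1 h0 with h | h
        · exact h
        · exact absurd ((mem_Q_inl l S i 0).1 h) hR
      have h1' : Sum.inl 1 ∈ S (i + 1) := by
        rcases Finset.mem_union.1 h1 with h | h
        · exact h
        · exact absurd ((mem_Q_inl l S i 1).1 h) hR
      by_cases hP : Sum.inl 0 ∈ S i ∪ Qseq (completeBipartiteGraph (Fin 2) (Fin (2 * l))) (strictMaj (completeBipartiteGraph (Fin 2) (Fin (2 * l)))) S i ∧ Sum.inl 1 ∈ S i ∪ Qseq (completeBipartiteGraph (Fin 2) (Fin (2 * l))) (strictMaj (completeBipartiteGraph (Fin 2) (Fin (2 * l)))) S i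
      · have h3 := lemA l S hl i (Or.inl hP)
        have := pair_sub_card l h0' h1'
        omega
      · have hsub := Rset_inter_subset l S i hP
        have h2 : l + 1 ≤ (((Finset.univ : Finset (Fin (2 * l))).image Sum.inr) ∩ (S (i + 1) ∪ Qseq (completeBipartiteGraph (Fin 2) (Fin (2 * l))) (strictMaj (completeBipartiteGraph (Fin 2) (Fin (2 * l)))) S (i + 1))).card := hR1
        have h4 : 4 ≤ (S (i + 1)).card := by
          apply four_le_card l hl h0' h1'
          calc l + 1 ≤ (((Finset.univ : Finset (Fin (2 * l))).image Sum.inr) ∩ (S (i + 1) ∪ Qseq (completeBipartiteGraph (Fin 2) (Fin (2 * l))) (strictMaj (completeBipartiteGraph (Fin 2) (Fin (2 * l)))) S (i + 1))).card := h2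
          _ ≤ (((Finset.univ : Finset (Fin (2 * l))).image Sum.inr) ∩ S (i + 1)).card := by
              apply Finset.card_le_card
              intro x hx
              rw [Finset.mem_inter] at hx ⊢
              exact ⟨hx.1, hsub (Finset.mem_inter.2 hx)⟩
        omega

/-- The lower bound: any timed target set has size at least 4. -/
lemma lower_bound (hl : 1 ≤ l) (k : ℕ) (h : IsTTS (completeBipartiteGraph (Fin 2) (Fin (2 * l))) (strictMaj (completeBipartiteGraph (Fin 2) (Fin (2 * l)))) S k) : 4 ≤ ttsSize S k := by
  obtain ⟨-, hQ⟩ := h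
  cases k with
  | zero =>
    exfalso
    have : (Sum.inl 0 : Fin 2 ⊕ Fin (2 * l)) ∈ Qseq (completeBipartiteGraph (Fin 2) (Fin (2 * l))) (strictMaj (completeBipartiteGraph (Fin 2) (Fin (2 * l)))) S 0 := by
      rw [hQ]; exact Finset.mem_univ _
    rw [Qseq] at this
    exact absurd this (Finset.notMem_empty _)
  | succ j =>
    have hb : (Sum.inr ⟨0, by omega⟩ : Fin 2 ⊕ Fin (2 * l)) ∈ Qseq (completeBipartiteGraph (Fin 2) (Fin (2 * l))) (strictMaj (completeBipartiteGraph (Fin 2) (Fin (2 * l)))) S (j + 1) := by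
      rw [hQ]; exact Finset.mem_univ _
    have ha : (Sum.inl 0 : Fin 2 ⊕ Fin (2 * l)) ∈ Qseq (completeBipartiteGraph (Fin 2) (Fin (2 * l))) (strictMaj (completeBipartiteGraph (Fin 2) (Fin (2 * l)))) S (j + 1) := by
      rw [hQ]; exact Finset.mem_univ _
    have hP := (mem_Q_inr l S j _).1 hb
    have hR := (mem_Q_inl l S j 0).1 ha
    have := lemB l S hl j hP hR
    rw [ttsSize, Finset.sum_range_succ]
    omega

end K22l

/-- tightness for even graphs: For `K_{2,2ℓ}` (`ℓ ≥ 1`) with strict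
majority thresholds, the sequence `S_0 = S_1 = {v_1, v_2}`, `S_2 = ∅` is a timed target
set of size 4, and the minimum timed target set size equals `4 = 4n/(Δ+2)`. -/
theorem stmt8 (l : ℕ) (hl : 1 ≤ l) :
    (IsTTS (completeBipartiteGraph (Fin 2) (Fin (2 * l)))
        (strictMaj (completeBipartiteGraph (Fin 2) (Fin (2 * l))))
        (fun i => if i ≤ 1 then {Sum.inl 0, Sum.inl 1} else ∅) 2
      ∧ ttsSize
          (fun i => if i ≤ 1 then ({Sum.inl 0, Sum.inl 1} : Finset (Fin 2 ⊕ Fin (2 * l)))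
            else ∅) 2 = 4)
    ∧ MTT (completeBipartiteGraph (Fin 2) (Fin (2 * l)))
        (strictMaj (completeBipartiteGraph (Fin 2) (Fin (2 * l)))) = 4
    ∧ 4 = 4 * Fintype.card (Fin 2 ⊕ Fin (2 * l)) /
        ((completeBipartiteGraph (Fin 2) (Fin (2 * l))).maxDegree + 2) := by
  set G' := completeBipartiteGraph (Fin 2) (Fin (2 * l)) with hG
  set τ'' := strictMaj (completeBipartiteGraph (Fin 2) (Fin (2 * l))) with hτ
  set S : ℕ → Finset (Fin 2 ⊕ Fin (2 * l)) :=
    fun i => if i ≤ 1 then {Sum.inl 0, Sum.inl 1} else ∅ with hS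
  have hS0 : S 0 = {Sum.inl 0, Sum.inl 1} := rfl
  have hS1 : S 1 = {Sum.inl 0, Sum.inl 1} := rfl
  have hS2 : S 2 = ∅ := rfl
  -- Q1 contains all right vertices
  have hQ1r : ∀ b : Fin (2 * l), Sum.inr b ∈ Qseq G' τ'' S 1 := by
    intro b
    refine (mem_Q_inr l S 0 b).2 ⟨?_, ?_⟩ <;>
      exact Finset.mem_union_left _ (by rw [hS0]; simp)
  -- Q2 = univ
  have hQ2 : Qseq G' τ'' S 2 = Finset.univ := by
    apply Finset.eq_univ_iff_forall.2
    intro v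
    cases v with
    | inl a =>
      apply (mem_Q_inl l S 1 a).2
      have hsub : (Finset.univ.image Sum.inr : Finset (Fin 2 ⊕ Fin (2 * l))) ⊆
          S 1 ∪ Qseq G' τ'' S 1 := by
        intro x hx
        obtain ⟨b, _, rfl⟩ := Finset.mem_image.1 hx
        exact Finset.mem_union_right _ (hQ1r b)
      rw [Finset.inter_eq_left.2 hsub, Rset_card]
      omega
    | inr b =>
      refine (mem_Q_inr l S 1 b).2 ⟨?_, ?_⟩ <;>
        exact Finset.mem_union_left _ (by rw [hS1]; simp)
  have hTTS : IsTTS G' τ'' S 2 := ⟨hS2, hQ2⟩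
  have hsize : ttsSize S 2 = 4 := by
    rw [ttsSize]
    rw [Finset.sum_range_succ, Finset.sum_range_succ, Finset.sum_range_one,
      hS0, hS1, hS2]
    rw [Finset.card_pair (inl_ne l), Finset.card_empty]
  refine ⟨⟨hTTS, hsize⟩, ?_, ?_⟩
  · -- MTT = 4
    rw [MTT]
    apply le_antisymm
    · exact Nat.sInf_le ⟨S, 2, hTTS, hsize⟩
    · have hne : {m | ∃ (S' : ℕ → Finset (Fin 2 ⊕ Fin (2 * l))) (k : ℕ),
          IsTTS G' τ'' S' k ∧ ttsSize S' k = m}.Nonempty := ⟨4, S, 2, hTTS, hsize⟩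
      obtain ⟨S', k', h', hsz⟩ := Nat.sInf_mem hne
      rw [← hsz]
      exact lower_bound l S' hl k' h'
  · -- arithmetic
    have hmax : G'.maxDegree = 2 * l := by
      apply le_antisymm
      · apply SimpleGraph.maxDegree_le_of_forall_degree_le
        intro v
        cases v with
        | inl a => rw [deg_inl]
        | inr b => rw [deg_inr]; omega
      · calc 2 * l = G'.degree (Sum.inl 0) := (deg_inl l 0).symm
        _ ≤ G'.maxDegree := SimpleGraph.degree_le_maxDegree _ _
    rw [hmax, Fintype.card_sum, Fintype.card_fin, Fintype.card_fin]
    rw [show 4 * (2 + 2 * l) = 4 * (2 * l + 2) by ring]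
    rw [Nat.mul_div_cancel _ (by omega)]
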